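/- With the nilpotent power function a^p = ∑_{j=0}^{n} (N^j/j!)(-1)^j(-p)_j a₀^(p-j) defined for a = a₀ + N with a₀ > 0 and N^(n+1) = 0 in a commutative ℝ-algebra, one has (a^p)^q = a^(pq) for all real p, q, where the body of a^p is a₀^p > 0 so the outer power is well defined. -/

import Mathlib

/-- Truncated binomial-series power `a ^ p` for an element `a = a₀·1 + K` of a commutative
`ℝ`-algebra, with positive real body `a₀` and nilpotent part `K` satisfying `K ^ (n+1) = 0`:
`a ^ p = ∑_{j=0}^{n} (K^j / j!) · (-1)^j · (-p)_j · a₀ ^ (p - j)`,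
where `(q)_j` is the rising Pochhammer symbol. -/
noncomputable def superPow {A : Type*} [CommRing A] [Algebra ℝ A] (n : ℕ)
    (x₀ : ℝ) (K : A) (p : ℝ) : A :=
  ∑ j ∈ Finset.range (n + 1),
    (((-1 : ℝ) ^ j * (ascPochhammer ℝ j).eval (-p) * x₀ ^ (p - (j : ℝ))) / (j.factorial : ℝ))
      • K ^ j

open Finset Polynomial

section Aux

variable {A : Type*} [CommRing A] [Algebra ℝ A]

/-- `descPochhammer` evaluation on `ℝ` in terms of `Ring.choose`. -/
lemma desc_eval_real (x : ℝ) (j : ℕ) :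
    (descPochhammer ℝ j).eval x = (j.factorial : ℝ) * Ring.choose x j := by
  have h1 : (descPochhammer ℤ j).smeval x = j.factorial • Ring.choose x j :=
    Ring.descPochhammer_eq_factorial_smul_choose x j
  have h2 : (descPochhammer ℤ j).smeval x = (descPochhammer ℝ j).eval x := by
    rw [← Polynomial.aeval_eq_smeval, aeval_def, ← Polynomial.eval_map,
      descPochhammer_map]
  rw [← h2, h1, nsmul_eq_mul]

/-- Rewriting `superPow` with generalized binomial coefficients. -/
lemma superPow_eq (n : ℕ) (x₀ : ℝ) (K : A) (p : ℝ) :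
    superPow n x₀ K p
      = ∑ j ∈ Finset.range (n + 1),
          (Ring.choose p j * x₀ ^ (p - (j : ℝ))) • K ^ j := by
  unfold superPow
  refine Finset.sum_congr rfl fun j _ => ?_
  congr 1
  rw [ascPochhammer_eval_neg_eq_descPochhammer, desc_eval_real]
  have hfac : (j.factorial : ℝ) ≠ 0 := Nat.cast_ne_zero.mpr j.factorial_ne_zero
  have hsq : ((-1 : ℝ)) ^ j * ((-1 : ℝ)) ^ j = 1 := by
    rw [← pow_add, ← two_mul, pow_mul]; norm_num
  field_simp
  ring_nf
  rw [mul_comm j 2, pow_mul]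
  norm_num

lemma pow_eq_zero_of_le' {N : A} {n m : ℕ} (hN : N ^ (n + 1) = 0) (h : n + 1 ≤ m) :
    N ^ m = 0 := by
  rw [← Nat.sub_add_cancel h, pow_add, hN, mul_zero]

/-- Vandermonde-type linear independence of powers in any real module. -/
lemma vandermonde_smul_zero {M : Type*} [AddCommGroup M] [Module ℝ M] (D : ℕ) (w : ℕ → M)
    (h : ∀ k : ℕ, ∑ m ∈ Finset.range D, (k : ℝ) ^ m • w m = 0) :
    ∀ m ∈ Finset.range D, w m = 0 := by
  intro m hm
  set W : Matrix (Fin D) (Fin D) ℝ := Matrix.vandermonde (fun k : Fin D => (k : ℝ)) with hW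
  have hdet : IsUnit W.det := by
    rw [hW, Matrix.det_vandermonde]
    refine (Finset.prod_ne_zero_iff.mpr fun i _ => Finset.prod_ne_zero_iff.mpr
      fun j hj => ?_).isUnit
    have hij : i < j := Finset.mem_Ioi.mp hj
    have : ((i : ℕ) : ℝ) < ((j : ℕ) : ℝ) := Nat.cast_lt.mpr hij
    exact ne_of_gt (sub_pos.mpr this)
  have hinv : W⁻¹ * W = 1 := Matrix.nonsing_inv_mul W hdet
  have key : ∀ k : Fin D, ∑ m' : Fin D, W k m' • w m' = 0 := by
    intro k
    have hk := h (k : ℕ)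
    rw [← Fin.sum_univ_eq_sum_range (fun m => ((k : ℕ) : ℝ) ^ m • w m) D] at hk
    simpa [hW, Matrix.vandermonde] using hk
  have hmD : m < D := Finset.mem_range.mp hm
  let mi : Fin D := ⟨m, hmD⟩
  have : w m = ∑ m' : Fin D, ((1 : Matrix (Fin D) (Fin D) ℝ) mi m') • w m' := by
    rw [Finset.sum_eq_single mi]
    · simp [Matrix.one_apply]; rfl
    · intro b _ hb
      simp [Matrix.one_apply, Ne.symm hb]
    · intro hmem; exact absurd (Finset.mem_univ mi) hmem
  rw [this, ← hinv]
  calc ∑ m' : Fin D, ((W⁻¹ * W) mi m') • w m'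
      = ∑ m' : Fin D, ∑ k : Fin D, (W⁻¹ mi k * W k m') • w m' := by
        refine Finset.sum_congr rfl fun m' _ => ?_
        rw [Matrix.mul_apply, Finset.sum_smul]
    _ = ∑ k : Fin D, (W⁻¹ mi k) • ∑ m' : Fin D, W k m' • w m' := by
        rw [Finset.sum_comm]
        refine Finset.sum_congr rfl fun k _ => ?_
        rw [Finset.smul_sum]
        exact Finset.sum_congr rfl fun m' _ => by rw [mul_smul]
    _ = 0 := by
        refine Finset.sum_eq_zero fun k _ => ?_
        rw [key k, smul_zero]

/-- A finite combination of polynomial functions (with module coefficients) vanishing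
on all naturals vanishes everywhere. -/
lemma poly_smul_ext {M : Type*} [AddCommGroup M] [Module ℝ M] {ι : Type*} (s : Finset ι)
    (P : ι → Polynomial ℝ) (v : ι → M)
    (h : ∀ k : ℕ, ∑ i ∈ s, (P i).eval ((k : ℕ) : ℝ) • v i = 0) (q : ℝ) :
    ∑ i ∈ s, (P i).eval q • v i = 0 := by
  set D := (s.sup fun i => (P i).natDegree) + 1 with hD
  have hdeg : ∀ i ∈ s, (P i).natDegree < D := fun i hi =>
    Nat.lt_succ_of_le (Finset.le_sup (f := fun i => (P i).natDegree) hi)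
  have expand : ∀ x : ℝ, ∑ i ∈ s, (P i).eval x • v i
      = ∑ m ∈ Finset.range D, x ^ m • (∑ i ∈ s, (P i).coeff m • v i) := by
    intro x
    calc ∑ i ∈ s, (P i).eval x • v i
        = ∑ i ∈ s, ∑ m ∈ Finset.range D, x ^ m • ((P i).coeff m • v i) := by
          refine Finset.sum_congr rfl fun i hi => ?_
          rw [Polynomial.eval_eq_sum_range' (hdeg i hi), Finset.sum_smul]
          exact Finset.sum_congr rfl fun m _ => by rw [smul_smul, mul_comm, mul_smul]
      _ = ∑ m ∈ Finset.range D, x ^ m • (∑ i ∈ s, (P i).coeff m • v i) := by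
          rw [Finset.sum_comm]
          exact Finset.sum_congr rfl fun m _ => by rw [Finset.smul_sum]
  have h0 : ∀ m ∈ Finset.range D, (∑ i ∈ s, (P i).coeff m • v i) = 0 :=
    vandermonde_smul_zero D _ (fun k => by rw [← expand]; exact h k)
  rw [expand q]
  exact Finset.sum_eq_zero fun m hm => by rw [h0 m hm, smul_zero]

/-- Multiplicativity in the exponent (additivity). -/
lemma superPow_mul_superPow (n : ℕ) (a₀ : ℝ) (ha : 0 < a₀) (N : A) (hN : N ^ (n + 1) = 0)
    (p r : ℝ) :
    superPow n a₀ N p * superPow n a₀ N r = superPow n a₀ N (p + r) := by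
  rw [superPow_eq, superPow_eq, superPow_eq, Finset.sum_mul_sum]
  have hterm : ∀ j k : ℕ,
      ((Ring.choose p j * a₀ ^ (p - (j : ℝ))) • N ^ j)
        * ((Ring.choose r k * a₀ ^ (r - (k : ℝ))) • N ^ k)
      = (Ring.choose p j * Ring.choose r k * a₀ ^ (p + r - ((j + k : ℕ) : ℝ)))
          • N ^ (j + k) := by
    intro j k
    rw [smul_mul_smul_comm, ← pow_add]
    congr 1
    rw [mul_mul_mul_comm, ← Real.rpow_add ha]
    push_cast
    ring_nf
  have hrw : (∑ j ∈ Finset.range (n + 1), ∑ k ∈ Finset.range (n + 1),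
        ((Ring.choose p j * a₀ ^ (p - (j : ℝ))) • N ^ j)
          * ((Ring.choose r k * a₀ ^ (r - (k : ℝ))) • N ^ k))
      = ∑ x ∈ Finset.range (n + 1) ×ˢ Finset.range (n + 1),
          (Ring.choose p x.1 * Ring.choose r x.2 * a₀ ^ (p + r - ((x.1 + x.2 : ℕ) : ℝ)))
            • N ^ (x.1 + x.2) := by
    rw [Finset.sum_product]
    exact Finset.sum_congr rfl fun j _ => Finset.sum_congr rfl fun k _ => hterm j k
  rw [hrw]
  rw [← Finset.sum_fiberwise_of_maps_to
    (g := fun x : ℕ × ℕ => x.1 + x.2) (t := Finset.range (2 * n + 1))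
    (fun x hx => by
      rw [Finset.mem_product] at hx
      have h1 := Finset.mem_range.mp hx.1
      have h2 := Finset.mem_range.mp hx.2
      exact Finset.mem_range.mpr (by show x.1 + x.2 < 2 * n + 1; omega))]
  rw [← Finset.sum_subset (Finset.range_subset_range.mpr (by omega : n + 1 ≤ 2 * n + 1))
    (fun m _ hm => ?_)]
  · refine Finset.sum_congr rfl fun m hm => ?_
    have hmn : m ≤ n := Nat.lt_succ_iff.mp (Finset.mem_range.mp hm)
    have hfilter : ((Finset.range (n + 1) ×ˢ Finset.range (n + 1)).filter
        fun x => x.1 + x.2 = m) = Finset.HasAntidiagonal.antidiagonal m := by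
      ext x
      simp only [Finset.mem_filter, Finset.mem_product, Finset.mem_range,
        Finset.HasAntidiagonal.mem_antidiagonal]
      constructor
      · exact fun hx => hx.2
      · intro hx
        exact ⟨⟨by omega, by omega⟩, hx⟩
    rw [hfilter]
    have : ∀ x ∈ Finset.HasAntidiagonal.antidiagonal m,
        (Ring.choose p x.1 * Ring.choose r x.2 * a₀ ^ (p + r - ((x.1 + x.2 : ℕ) : ℝ)))
            • N ^ (x.1 + x.2)
        = (Ring.choose p x.1 * Ring.choose r x.2)
            • (a₀ ^ (p + r - (m : ℝ)) • N ^ m) := by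
      intro x hx
      rw [Finset.HasAntidiagonal.mem_antidiagonal] at hx
      rw [hx, mul_smul]
    rw [Finset.sum_congr rfl this, ← Finset.sum_smul,
      ← Ring.add_choose_eq m (Commute.all p r), mul_smul]
  · refine Finset.sum_eq_zero fun x hx => ?_
    rw [Finset.mem_filter] at hx
    rw [hx.2, pow_eq_zero_of_le' hN (by simpa using hm), smul_zero]

lemma superPow_zero (n : ℕ) (a₀ : ℝ) (N : A) : superPow n a₀ N 0 = 1 := by
  rw [superPow_eq]
  rw [Finset.sum_eq_single 0]
  · simp [Ring.choose_zero_right, Real.rpow_zero]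
  · intro j _ hj
    obtain ⟨i, rfl⟩ := Nat.exists_eq_succ_of_ne_zero hj
    rw [Ring.choose_zero_succ, zero_mul, zero_smul]
  · intro h; exact absurd (Finset.mem_range.mpr (Nat.succ_pos n)) h

lemma superPow_pow (n : ℕ) (a₀ : ℝ) (ha : 0 < a₀) (N : A) (hN : N ^ (n + 1) = 0)
    (p : ℝ) (k : ℕ) :
    (superPow n a₀ N p) ^ k = superPow n a₀ N (p * k) := by
  induction k with
  | zero => simpa using (superPow_zero n a₀ N).symm
  | succ k ih =>
    rw [pow_succ, ih, superPow_mul_superPow n a₀ ha N hN]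
    congr 1
    push_cast
    ring

/-- `superPow` at a natural exponent is an honest power. -/
lemma superPow_natCast (n : ℕ) (b : ℝ) (hb : 0 < b) (K : A) (hK : K ^ (n + 1) = 0) (k : ℕ) :
    superPow n b K ((k : ℕ) : ℝ) = (algebraMap ℝ A b + K) ^ k := by
  rw [superPow_eq, add_comm (algebraMap ℝ A b) K, add_pow]
  have hterm : ∀ j : ℕ,
      (Ring.choose ((k : ℕ) : ℝ) j * b ^ (((k : ℕ) : ℝ) - (j : ℝ))) • K ^ j
      = K ^ j * (algebraMap ℝ A b) ^ (k - j) * (k.choose j : A) := by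
    intro j
    by_cases hjk : j ≤ k
    · rw [Ring.choose_natCast]
      have hcast : (((k - j : ℕ) : ℝ)) = ((k : ℕ) : ℝ) - (j : ℝ) := by
        push_cast [Nat.cast_sub hjk]; ring
      rw [← hcast, Real.rpow_natCast, Algebra.smul_def, map_mul, map_natCast, map_pow]
      ring
    · have h1 : k.choose j = 0 := Nat.choose_eq_zero_of_lt (by omega)
      rw [Ring.choose_natCast, h1]
      simp
  calc ∑ j ∈ Finset.range (n + 1),
        (Ring.choose ((k : ℕ) : ℝ) j * b ^ (((k : ℕ) : ℝ) - (j : ℝ))) • K ^ j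
      = ∑ j ∈ Finset.range (max n k + 1),
        (Ring.choose ((k : ℕ) : ℝ) j * b ^ (((k : ℕ) : ℝ) - (j : ℝ))) • K ^ j := by
        refine Finset.sum_subset (Finset.range_subset_range.mpr (by omega)) fun j _ hj => ?_
        have : n + 1 ≤ j := by
          by_contra hc
          exact hj (Finset.mem_range.mpr (by omega))
        rw [pow_eq_zero_of_le' hK this, smul_zero]
    _ = ∑ j ∈ Finset.range (max n k + 1),
        K ^ j * (algebraMap ℝ A b) ^ (k - j) * (k.choose j : A) := by
        exact Finset.sum_congr rfl fun j _ => hterm j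
    _ = ∑ j ∈ Finset.range (k + 1),
        K ^ j * (algebraMap ℝ A b) ^ (k - j) * (k.choose j : A) := by
        refine (Finset.sum_subset (Finset.range_subset_range.mpr (by omega)) fun j _ hj => ?_).symm
        have : k < j := by
          by_contra hc
          exact hj (Finset.mem_range.mpr (by omega))
        rw [Nat.choose_eq_zero_of_lt this]
        simp

/-- The nilpotent part of `superPow` is nilpotent of the same order. -/
lemma superPow_sub_body_nilpotent (n : ℕ) (a₀ : ℝ) (N : A) (hN : N ^ (n + 1) = 0) (p : ℝ) :
    (superPow n a₀ N p - algebraMap ℝ A (a₀ ^ p)) ^ (n + 1) = 0 := by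
  obtain ⟨M, hM⟩ : ∃ M : A, superPow n a₀ N p - algebraMap ℝ A (a₀ ^ p) = N * M := by
    refine ⟨∑ i ∈ Finset.range n,
      (Ring.choose p (i + 1) * a₀ ^ (p - ((i + 1 : ℕ) : ℝ))) • N ^ i, ?_⟩
    rw [superPow_eq, Finset.sum_range_succ']
    have h0 : (Ring.choose p 0 * a₀ ^ (p - ((0 : ℕ) : ℝ))) • N ^ 0
        = algebraMap ℝ A (a₀ ^ p) := by
      rw [Ring.choose_zero_right, one_mul, Nat.cast_zero, sub_zero, pow_zero,
        Algebra.algebraMap_eq_smul_one]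
    rw [h0, add_sub_cancel_right, Finset.mul_sum]
    exact Finset.sum_congr rfl fun i _ => by
      rw [mul_smul_comm, ← pow_succ']
  rw [hM, mul_pow, hN, zero_mul]

end Aux

/-- For `a = a₀ + N` with `a₀ > 0` and `N^(n+1) = 0`, the element `a^p` has body `a₀^p > 0`
and nilpotent part `a^p - a₀^p`, and one has `(a^p)^q = a^(pq)` for all real `p, q`. -/
theorem superPow_superPow {A : Type*} [CommRing A] [Algebra ℝ A] (n : ℕ)
    (a₀ : ℝ) (ha : 0 < a₀) (N : A) (hN : N ^ (n + 1) = 0) (p q : ℝ) :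
    superPow n (a₀ ^ p) (superPow n a₀ N p - algebraMap ℝ A (a₀ ^ p)) q
      = superPow n a₀ N (p * q) := by
  set b : ℝ := a₀ ^ p with hb
  have hbpos : 0 < b := Real.rpow_pos_of_pos ha p
  set K : A := superPow n a₀ N p - algebraMap ℝ A b with hKdef
  have hKnil : K ^ (n + 1) = 0 := superPow_sub_body_nilpotent n a₀ N hN p
  have hsum : algebraMap ℝ A b + K = superPow n a₀ N p := by rw [hKdef]; ring
  -- the identity at natural exponents
  have hnat : ∀ k : ℕ, superPow n b K ((k : ℕ) : ℝ) = superPow n a₀ N (p * ((k : ℕ) : ℝ)) := by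
    intro k
    rw [superPow_natCast n b hbpos K hKnil k, hsum, superPow_pow n a₀ ha N hN p k]
  -- polynomial coefficient data
  set P : ℕ ⊕ ℕ → Polynomial ℝ := Sum.elim
    (fun j => Polynomial.C ((j.factorial : ℝ)⁻¹) * descPochhammer ℝ j)
    (fun m => Polynomial.C ((m.factorial : ℝ)⁻¹)
      * ((descPochhammer ℝ m).comp (Polynomial.C p * Polynomial.X))) with hP
  set v : ℕ ⊕ ℕ → A := Sum.elim
    (fun j => (b ^ (-(j : ℝ))) • K ^ j)
    (fun m => -((a₀ ^ (-(m : ℝ))) • N ^ m)) with hv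
  set s : Finset (ℕ ⊕ ℕ) := (Finset.range (n + 1)).disjSum (Finset.range (n + 1)) with hs
  have hPl : ∀ (j : ℕ) (x : ℝ), (P (Sum.inl j)).eval x = Ring.choose x j := by
    intro j x
    have hfac : (j.factorial : ℝ) ≠ 0 := Nat.cast_ne_zero.mpr j.factorial_ne_zero
    rw [hP]
    simp only [Sum.elim_inl, Polynomial.eval_mul, Polynomial.eval_C, desc_eval_real]
    field_simp
  have hPr : ∀ (m : ℕ) (x : ℝ), (P (Sum.inr m)).eval x = Ring.choose (p * x) m := by
    intro m x
    have hfac : (m.factorial : ℝ) ≠ 0 := Nat.cast_ne_zero.mpr m.factorial_ne_zero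
    rw [hP]
    simp only [Sum.elim_inr, Polynomial.eval_mul, Polynomial.eval_C, Polynomial.eval_comp,
      Polynomial.eval_X, desc_eval_real]
    field_simp
  -- the key pointwise identity
  have key : ∀ x : ℝ, superPow n b K x - superPow n a₀ N (p * x)
      = (a₀ ^ (p * x)) • ∑ i ∈ s, (P i).eval x • v i := by
    intro x
    have hbx : a₀ ^ (p * x) = b ^ x := Real.rpow_mul (le_of_lt ha) p x
    have hshift : ∀ (t : ℝ), 0 < t → ∀ (xx y c : ℝ),
        t ^ xx * (c * t ^ (-y)) = c * t ^ (xx - y) := by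
      intro t ht xx y c
      rw [sub_eq_add_neg, Real.rpow_add ht]
      ring
    have e1 : (a₀ ^ (p * x)) • ∑ j ∈ Finset.range (n + 1),
          (P (Sum.inl j)).eval x • v (Sum.inl j)
        = superPow n b K x := by
      rw [superPow_eq, Finset.smul_sum]
      refine Finset.sum_congr rfl fun j _ => ?_
      rw [hPl j x, hv]
      simp only [Sum.elim_inl]
      rw [smul_smul, smul_smul, hbx]
      congr 1
      rw [mul_assoc]
      exact hshift b hbpos x (j : ℝ) (Ring.choose x j)
    have e2 : (a₀ ^ (p * x)) • ∑ m ∈ Finset.range (n + 1),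
          (P (Sum.inr m)).eval x • v (Sum.inr m)
        = -superPow n a₀ N (p * x) := by
      rw [superPow_eq, Finset.smul_sum, ← Finset.sum_neg_distrib]
      refine Finset.sum_congr rfl fun m _ => ?_
      rw [hPr m x, hv]
      simp only [Sum.elim_inr]
      rw [smul_neg, smul_neg, ← neg_smul, ← neg_smul, smul_smul, smul_smul]
      congr 1
      have h := hshift a₀ ha (p * x) (m : ℝ) (Ring.choose (p * x) m)
      linear_combination -h
    rw [hs, Finset.sum_disjSum, smul_add, e1, e2, ← sub_eq_add_neg]
  -- vanishing at naturals
  have h0 : ∀ k : ℕ, ∑ i ∈ s, (P i).eval ((k : ℕ) : ℝ) • v i = 0 := by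
    intro k
    have hk := hnat k
    have hdiff : (a₀ ^ (p * ((k : ℕ) : ℝ))) • ∑ i ∈ s, (P i).eval ((k : ℕ) : ℝ) • v i = 0 := by
      rw [← key ((k : ℕ) : ℝ), hk, sub_self]
    have hne : (a₀ ^ (p * ((k : ℕ) : ℝ))) ≠ 0 := ne_of_gt (Real.rpow_pos_of_pos ha _)
    have := congrArg (fun z => (a₀ ^ (p * ((k : ℕ) : ℝ)))⁻¹ • z) hdiff
    simpa [smul_smul, inv_mul_cancel₀ hne] using this
  -- conclude for arbitrary real exponent
  have hq : ∑ i ∈ s, (P i).eval q • v i = 0 := poly_smul_ext s P v h0 q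
  have := key q
  rw [hq, smul_zero, sub_eq_zero] at this
  exact this
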